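/- (generalise_Δ is a generalisation operation.) For every division Δ and every finite set S of atoms safe wrt Δ: generalise_Δ(S) is a finite set of atoms using the same predicate symbols as those occurring in S, and every atom in S is an instance of an atom in generalise_Δ(S). -/

import Mathlib

/-- First-order terms over countably infinite sets of variables (ℕ)
and function symbols (ℕ). -/
inductive Term : Type where
  | var : ℕ → Term
  | app : ℕ → List Term → Term

namespace Term

/-- Applying a substitution (a mapping from variables to terms) homomorphically. -/
def subst (θ : ℕ → Term) : Term → Term
  | var v => θ v
  | app f ts => app f (ts.attach.map (fun x => x.1.subst θ))
decreasing_by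
  have := List.sizeOf_lt_of_mem x.2
  simp only [Term.app.sizeOf_spec]
  omega

/-- A term is ground if it contains no variables. -/
inductive Ground : Term → Prop where
  | app : ∀ f ts, (∀ t ∈ ts, Ground t) → Ground (app f ts)

/-- The variable `v` occurs in the term. -/
inductive Occurs (v : ℕ) : Term → Prop where
  | var : Occurs v (var v)
  | app : ∀ f ts t, t ∈ ts → Occurs v t → Occurs v (app f ts)

/-- `s` is an instance of `t` if `s = tθ` for some substitution `θ`. -/
def IsInstanceOf (s t : Term) : Prop := ∃ θ : ℕ → Term, t.subst θ = s

/-- Two terms are variants if each is an instance of the other. -/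
def Variant (s t : Term) : Prop := s.IsInstanceOf t ∧ t.IsInstanceOf s


theorem subst_app (θ : ℕ → Term) (f : ℕ) (ts : List Term) :
    subst θ (app f ts) = app f (ts.map (subst θ)) := by
  rw [subst]; simp

theorem subst_id : ∀ t : Term, t.subst Term.var = t := by
  intro t
  induction t using Term.subst.induct with
  | case1 v => rw [subst]
  | case2 f ts ih =>
    rw [subst_app]
    simpa using List.map_congr_left (fun a (ha : a ∈ ts) => ih ⟨a, ha⟩)

theorem subst_subst (θ θ' : ℕ → Term) : ∀ t : Term,
    (t.subst θ).subst θ' = t.subst (fun v => (θ v).subst θ') := by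
  intro t
  induction t using Term.subst.induct with
  | case1 v => show subst θ' (subst θ (var v)) = _; rw [subst, subst]
  | case2 f ts ih =>
    rw [subst_app, subst_app, subst_app, List.map_map]
    exact congrArg _ (List.map_congr_left (fun a ha => ih ⟨a, ha⟩))

theorem subst_congr (θ θ' : ℕ → Term) : ∀ t : Term,
    (∀ v, Occurs v t → θ v = θ' v) → t.subst θ = t.subst θ' := by
  intro t
  induction t using Term.subst.induct with
  | case1 v => intro h; rw [subst, subst]; exact h v .var
  | case2 f ts ih =>
    intro h
    rw [subst_app, subst_app]
    exact congrArg _ (List.map_congr_left (fun a ha => ih ⟨a, ha⟩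
      (fun v hv => h v (.app f ts a ha hv))))
end Term

/-- Types: type variables, the distinguished 0-ary constructors
`static`, `dynamic`, `nonvar`, and other constructors applied to types. -/
inductive Ty : Type where
  | var : ℕ → Ty
  | static : Ty
  | dynamic : Ty
  | nonvar : Ty
  | con : ℕ → List Ty → Ty

namespace Ty

/-- Applying a type substitution. -/
def subst (σ : ℕ → Ty) : Ty → Ty
  | var v => σ v
  | static => static
  | dynamic => dynamic
  | nonvar => nonvar
  | con c args => con c (args.attach.map (fun x => x.1.subst σ))
decreasing_by
  have := List.sizeOf_lt_of_mem x.2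
  simp only [Ty.con.sizeOf_spec]
  omega

/-- A type is ground if it contains no type variables. -/
inductive Ground : Ty → Prop where
  | static : Ground static
  | dynamic : Ground dynamic
  | nonvar : Ground nonvar
  | con : ∀ c args, (∀ τ ∈ args, Ground τ) → Ground (con c args)

/-- All type variables of the type are below `n`. -/
inductive VarsBelow (n : ℕ) : Ty → Prop where
  | var : ∀ v, v < n → VarsBelow n (var v)
  | static : VarsBelow n static
  | dynamic : VarsBelow n dynamic
  | nonvar : VarsBelow n nonvar
  | con : ∀ c args, (∀ τ ∈ args, VarsBelow n τ) → VarsBelow n (con c args)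

end Ty

/-- A type definition `c(V₁,…,Vₙ) → f₁(T₁¹,…) ; … ; f_k(T_k¹,…)` for an
`n`-ary type constructor: the variables are represented by `0,…,arity-1`,
the alternatives are pairs of a function symbol and the list of argument types;
the function symbols are distinct and the argument types only use
variables among `0,…,arity-1`. -/
structure TypeDef where
  arity : ℕ
  alts : List (ℕ × List Ty)
  alts_nonempty : alts ≠ []
  alts_nodup : (alts.map Prod.fst).Nodup
  vars_bound : ∀ p ∈ alts, ∀ τ ∈ p.2, Ty.VarsBelow arity τ

/-- A type system: exactly one type definition for every type constructor
other than `static`, `dynamic` and `nonvar`. -/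
structure TypeSystem where
  defs : ℕ → TypeDef

mutual
/-- The type judgement `t : τ` relative to the type system `Γ`. -/
inductive HasType (Γ : TypeSystem) : Term → Ty → Prop where
  | dyn (t : Term) : HasType Γ t .dynamic
  | stat (t : Term) : t.Ground → HasType Γ t .static
  | nv (f : ℕ) (ts : List Term) : HasType Γ (.app f ts) .nonvar
  | con (c : ℕ) (σ : ℕ → Ty) (f : ℕ) (Ts : List Ty) (ts : List Term)
      (hσ : ∀ v, (σ v).Ground)
      (hmem : (f, Ts) ∈ (Γ.defs c).alts)
      (hargs : HasTypeArgs Γ ts (Ts.map (Ty.subst σ))) :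
      HasType Γ (.app f ts) (.con c ((List.range (Γ.defs c).arity).map σ))

/-- `HasTypeArgs Γ ts τs` : the terms `ts` pointwise have the types `τs`. -/
inductive HasTypeArgs (Γ : TypeSystem) : List Term → List Ty → Prop where
  | nil : HasTypeArgs Γ [] []
  | cons {t τ ts τs} : HasType Γ t τ → HasTypeArgs Γ ts τs →
      HasTypeArgs Γ (t :: ts) (τ :: τs)
end

/-- Atoms `p(t₁,…,tₙ)` over a countably infinite set of predicate symbols (ℕ). -/
structure Atom where
  pred : ℕ
  args : List Term

namespace Atom

/-- Substitutions apply to atoms argumentwise. -/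
def subst (θ : ℕ → Term) (A : Atom) : Atom := ⟨A.pred, A.args.map (Term.subst θ)⟩

/-- `B` is an instance of `A`. -/
def IsInstanceOf (B A : Atom) : Prop := ∃ θ : ℕ → Term, A.subst θ = B

/-- Two atoms are variants if each is an instance of the other. -/
def Variant (A B : Atom) : Prop := A.IsInstanceOf B ∧ B.IsInstanceOf A

end Atom

/-- A division: a set of expressions `p(τ₁,…,τₙ)` (represented as pairs of a
predicate symbol and a list of types), with all types ground and at most one
division per predicate. -/
def IsDivision (Δ : Set (ℕ × List Ty)) : Prop :=
  (∀ d ∈ Δ, ∀ τ ∈ d.2, τ.Ground) ∧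
  (∀ d ∈ Δ, ∀ d' ∈ Δ, d.1 = d'.1 → d = d')

/-- An atom `p(t₁,…,tₙ)` is safe wrt `Δ` iff there is `p(τ₁,…,τₙ) ∈ Δ`
with `tᵢ : τᵢ` for all `i`. -/
def SafeAtom (Γ : TypeSystem) (Δ : Set (ℕ × List Ty)) (A : Atom) : Prop :=
  ∃ τs : List Ty, (A.pred, τs) ∈ Δ ∧ HasTypeArgs Γ A.args τs

mutual
/-- `Gen Γ τ t s L`: `s` is a result of the partial generalisation mapping
`gen_τ(t)`, where `L` records (in order) the fresh variables chosen. -/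
inductive Gen (Γ : TypeSystem) : Ty → Term → Term → List ℕ → Prop where
  | static (t : Term) : Gen Γ .static t t []
  | dynamic (t : Term) (v : ℕ) : Gen Γ .dynamic t (.var v) [v]
  | nonvar (f : ℕ) (ts : List Term) (vs : List ℕ) (h : vs.length = ts.length) :
      Gen Γ .nonvar (.app f ts) (.app f (vs.map Term.var)) vs
  | con (c : ℕ) (σ : ℕ → Ty) (f : ℕ) (Ts : List Ty) (ts ss : List Term) (L : List ℕ)
      (hσ : ∀ v, (σ v).Ground)
      (hmem : (f, Ts) ∈ (Γ.defs c).alts)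
      (hargs : GenArgs Γ (Ts.map (Ty.subst σ)) ts ss L) :
      Gen Γ (.con c ((List.range (Γ.defs c).arity).map σ)) (.app f ts) (.app f ss) L

/-- Pointwise generalisation of a list of terms, collecting the fresh variables. -/
inductive GenArgs (Γ : TypeSystem) : List Ty → List Term → List Term → List ℕ → Prop where
  | nil : GenArgs Γ [] [] [] []
  | cons {τ t s L τs ts ss Ls} : Gen Γ τ t s L → GenArgs Γ τs ts ss Ls →
      GenArgs Γ (τ :: τs) (t :: ts) (s :: ss) (L ++ Ls)

end

def OccM1 (t s : Term) (L : List ℕ) : Prop :=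
  ∀ v, Term.Occurs v s → Term.Occurs v t ∨ v ∈ L

def OccM2 (ts ss : List Term) (L : List ℕ) : Prop :=
  ∀ v, ∀ s ∈ ss, Term.Occurs v s → (∃ t ∈ ts, Term.Occurs v t) ∨ v ∈ L

theorem occ1 : ∀ t : Term, OccM1 t t [] := fun _ _ h => .inl h

theorem occ2 : ∀ (t : Term) (v : ℕ), OccM1 t (.var v) [v] := by
  intro t v u hu; cases hu; exact .inr (List.mem_singleton.mpr rfl)

theorem occ3 : ∀ (f : ℕ) (ts : List Term) (vs : List ℕ) (_ : vs.length = ts.length),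
    OccM1 (.app f ts) (.app f (vs.map Term.var)) vs := by
  intro f ts vs h v hv
  cases hv with
  | app _ _ t' ht' hocc =>
    obtain ⟨u, hu, rfl⟩ := List.mem_map.mp ht'
    cases hocc; exact .inr hu

theorem occ4 (Γ : TypeSystem) :
    ∀ (c : ℕ) (σ : ℕ → Ty) (f : ℕ) (Ts : List Ty) (ts ss : List Term) (L : List ℕ),
    (∀ v, (σ v).Ground) → ((f, Ts) ∈ (Γ.defs c).alts) →
    GenArgs Γ (Ts.map (Ty.subst σ)) ts ss L → OccM2 ts ss L →
    OccM1 (.app f ts) (.app f ss) L := by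
  intro c σ f Ts ts ss L _ _ _ IH v hv
  cases hv with
  | app _ _ t' ht' hocc =>
    rcases IH v t' ht' hocc with ⟨t'', ht'', h2⟩ | hL
    · exact .inl (.app f ts t'' ht'' h2)
    · exact .inr hL

theorem occ5 : OccM2 [] [] [] := fun _ s hs => absurd hs List.not_mem_nil

theorem occ6 (Γ : TypeSystem) :
    ∀ {τ : Ty} {t s : Term} {L : List ℕ} {τs : List Ty} {ts ss : List Term} {Ls : List ℕ},
    Gen Γ τ t s L → GenArgs Γ τs ts ss Ls → OccM1 t s L → OccM2 ts ss Ls →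
    OccM2 (t :: ts) (s :: ss) (L ++ Ls) := by
  intro τ t s L τs ts ss Ls _ _ IH1 IH2 v s' hs' hocc
  rcases List.mem_cons.mp hs' with rfl | hs'
  · rcases IH1 v hocc with h | h
    · exact .inl ⟨t, List.mem_cons_self, h⟩
    · exact .inr (List.mem_append_left _ h)
  · rcases IH2 v s' hs' hocc with ⟨t', ht', h⟩ | h
    · exact .inl ⟨t', List.mem_cons_of_mem _ ht', h⟩
    · exact .inr (List.mem_append_right _ h)

theorem gen_occurs {Γ : TypeSystem} {τ t s L} (h : Gen Γ τ t s L) : OccM1 t s L :=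
  Gen.rec (motive_1 := fun _ t s L _ => OccM1 t s L)
    (motive_2 := fun _ ts ss L _ => OccM2 ts ss L)
    occ1 occ2 occ3 (occ4 Γ) occ5 (fun a a1 => occ6 Γ a a1) h

theorem genArgs_occurs {Γ : TypeSystem} {τs ts ss L} (h : GenArgs Γ τs ts ss L) :
    OccM2 ts ss L :=
  GenArgs.rec (motive_1 := fun _ t s L _ => OccM1 t s L)
    (motive_2 := fun _ ts ss L _ => OccM2 ts ss L)
    occ1 occ2 occ3 (occ4 Γ) occ5 (fun a a1 => occ6 Γ a a1) h

def SubM1 (t s : Term) (L : List ℕ) : Prop :=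
  L.Nodup → (∀ v ∈ L, ¬ Term.Occurs v t) →
    ∃ θ : ℕ → Term, s.subst θ = t ∧ ∀ v, v ∉ L → θ v = Term.var v

def SubM2 (ts ss : List Term) (L : List ℕ) : Prop :=
  L.Nodup → (∀ v ∈ L, ∀ t ∈ ts, ¬ Term.Occurs v t) →
    ∃ θ : ℕ → Term, ss.map (Term.subst θ) = ts ∧ ∀ v, v ∉ L → θ v = Term.var v

theorem sub1 : ∀ t : Term, SubM1 t t [] :=
  fun t _ _ => ⟨Term.var, Term.subst_id t, fun _ _ => rfl⟩

theorem sub2 : ∀ (t : Term) (v : ℕ), SubM1 t (.var v) [v] := by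
  intro t v _ _
  refine ⟨fun u => if u = v then t else .var u, ?_, ?_⟩
  · rw [Term.subst]; simp
  · intro u hu; simp only [List.mem_singleton] at hu; exact if_neg hu

theorem sub3 : ∀ (f : ℕ) (ts : List Term) (vs : List ℕ) (_ : vs.length = ts.length),
    SubM1 (.app f ts) (.app f (vs.map Term.var)) vs := by
  intro f ts vs hlen hnd _
  refine ⟨fun u => if u ∈ vs then ts.getD (vs.idxOf u) (Term.var 0) else Term.var u, ?_, ?_⟩
  · rw [Term.subst_app, List.map_map]
    congr 1
    apply List.ext_getElem (by simp [hlen])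
    intro i h1 h2
    simp only [List.getElem_map, Function.comp_apply]
    rw [Term.subst]
    have hmem : vs[i] ∈ vs := List.getElem_mem _
    rw [if_pos hmem, List.Nodup.idxOf_getElem hnd i (by simpa using h1),
      List.getD_eq_getElem _ _ h2]
  · intro u hu; exact if_neg hu

theorem sub4 (Γ : TypeSystem) :
    ∀ (c : ℕ) (σ : ℕ → Ty) (f : ℕ) (Ts : List Ty) (ts ss : List Term) (L : List ℕ),
    (∀ v, (σ v).Ground) → ((f, Ts) ∈ (Γ.defs c).alts) →
    GenArgs Γ (Ts.map (Ty.subst σ)) ts ss L → SubM2 ts ss L →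
    SubM1 (.app f ts) (.app f ss) L := by
  intro c σ f Ts ts ss L _ _ _ IH hnd hfr
  obtain ⟨θ, heq, hout⟩ := IH hnd
    (fun v hv t' ht' hocc => hfr v hv (.app f ts t' ht' hocc))
  exact ⟨θ, by rw [Term.subst_app, heq], hout⟩

theorem sub5 : SubM2 [] [] [] := fun _ _ => ⟨Term.var, rfl, fun _ _ => rfl⟩

theorem sub6 (Γ : TypeSystem) :
    ∀ {τ : Ty} {t s : Term} {L : List ℕ} {τs : List Ty} {ts ss : List Term} {Ls : List ℕ},
    Gen Γ τ t s L → GenArgs Γ τs ts ss Ls → SubM1 t s L → SubM2 ts ss Ls →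
    SubM2 (t :: ts) (s :: ss) (L ++ Ls) := by
  intro τ t s L τs ts ss Ls a a1 IH1 IH2 hnd hfr
  rw [List.nodup_append] at hnd
  obtain ⟨hnd1, hnd2, hdisj⟩ := hnd
  obtain ⟨θ₁, heq1, hout1⟩ := IH1 hnd1
    (fun v hv => hfr v (List.mem_append_left _ hv) t (List.mem_cons_self))
  obtain ⟨θ₂, heq2, hout2⟩ := IH2 hnd2
    (fun v hv t' ht' => hfr v (List.mem_append_right _ hv) t' (List.mem_cons_of_mem _ ht'))
  refine ⟨fun v => if v ∈ L then θ₁ v else θ₂ v, ?_, ?_⟩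
  · rw [List.map_cons]
    congr 1
    · rw [← heq1]
      apply Term.subst_congr
      intro v hv
      by_cases hvL : v ∈ L
      · rw [if_pos hvL]
      · rcases gen_occurs a v hv with hocc | hL
        · by_cases hvLs : v ∈ Ls
          · exact absurd hocc
              (hfr v (List.mem_append_right _ hvLs) t (List.mem_cons_self))
          · rw [if_neg hvL, hout2 v hvLs, hout1 v hvL]
        · exact absurd hL hvL
    · rw [← heq2]
      apply List.map_congr_left
      intro s' hs'
      apply Term.subst_congr
      intro v hv
      have hvL : v ∉ L := by
        intro hvL
        rcases genArgs_occurs a1 v s' hs' hv with ⟨t', ht', hocc⟩ | hLs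
        · exact hfr v (List.mem_append_left _ hvL) t' (List.mem_cons_of_mem _ ht') hocc
        · exact hdisj v hvL v hLs rfl
      rw [if_neg hvL]
  · intro v hv
    rw [List.mem_append] at hv
    push_neg at hv
    exact (if_neg hv.1).trans (hout2 v hv.2)

theorem genArgs_subst {Γ : TypeSystem} {τs ts ss L} (h : GenArgs Γ τs ts ss L) :
    SubM2 ts ss L :=
  GenArgs.rec (motive_1 := fun _ t s L _ => SubM1 t s L)
    (motive_2 := fun _ ts ss L _ => SubM2 ts ss L)
    sub1 sub2 sub3 (sub4 Γ) sub5 (fun a a1 => sub6 Γ a a1) h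


/-- `GenAtom Γ Δ A B L`: `B` is a result of `gen_Δ(A)` with fresh variables `L`. -/
def GenAtom (Γ : TypeSystem) (Δ : Set (ℕ × List Ty)) (A B : Atom) (L : List ℕ) : Prop :=
  B.pred = A.pred ∧
  ∃ τs : List Ty, (A.pred, τs) ∈ Δ ∧ HasTypeArgs Γ A.args τs ∧
    GenArgs Γ τs A.args B.args L

/-- **`generalise_Δ` is a generalisation operation.** For every division `Δ` and
every finite set `S` of atoms safe wrt `Δ`: `generalise_Δ(S)` is a finite set of
atoms using the same predicate symbols as those occurring in `S`, and every atom
in `S` is an instance of an atom in `generalise_Δ(S)`. -/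
theorem generalise_is_generalisation (Γ : TypeSystem) (Δ : Set (ℕ × List Ty))
    (hΔ : IsDivision Δ)
    (S : Set Atom) (hfin : S.Finite) (hsafe : ∀ A ∈ S, SafeAtom Γ Δ A)
    -- `g A` is a result of `gen_Δ(A)` (with distinct fresh variables not
    -- occurring in `A`), for every `A ∈ S`
    (g : Atom → Atom)
    (hg : ∀ A ∈ S, ∃ L : List ℕ, GenAtom Γ Δ A (g A) L ∧ L.Nodup ∧
            ∀ v ∈ L, ∀ t ∈ A.args, ¬ Term.Occurs v t)
    -- `S₁` is a minimal subset of `S₂ = { gen_Δ(s) | s ∈ S }` such that every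
    -- element of `S₂` has a variant in `S₁`
    (S₁ : Set Atom)
    (hsub : S₁ ⊆ g '' S)
    (hcover : ∀ B ∈ g '' S, ∃ B' ∈ S₁, B.Variant B')
    (hmin : ∀ S₀ ⊆ S₁, (∀ B ∈ g '' S, ∃ B' ∈ S₀, B.Variant B') → S₀ = S₁) :
    S₁.Finite ∧ (∀ B ∈ S₁, ∃ A ∈ S, B.pred = A.pred) ∧
      (∀ A ∈ S, ∃ B ∈ S₁, A.IsInstanceOf B) := by
  refine ⟨(hfin.image g).subset hsub, ?_, ?_⟩
  · intro B hB
    obtain ⟨A, hA, rfl⟩ := hsub hB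
    obtain ⟨L, ⟨hpred, _⟩, _, _⟩ := hg A hA
    exact ⟨A, hA, hpred⟩
  · intro A hA
    obtain ⟨L, ⟨hpred, τs, hτ, hty, hgenargs⟩, hnd, hfr⟩ := hg A hA
    obtain ⟨θ₀, heq₀, -⟩ := genArgs_subst hgenargs hnd hfr
    have hinst : (g A).subst θ₀ = A := by
      cases A with
      | mk p args =>
        simp only [Atom.subst, Atom.mk.injEq]
        exact ⟨hpred, heq₀⟩
    obtain ⟨B', hB', hvar⟩ := hcover (g A) ⟨A, hA, rfl⟩
    obtain ⟨θ', heq'⟩ := hvar.1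
    refine ⟨B', hB', fun v => (θ' v).subst θ₀, ?_⟩
    have hcomp : B'.subst (fun v => (θ' v).subst θ₀) = (B'.subst θ').subst θ₀ := by
      simp only [Atom.subst, List.map_map]
      congr 1
      exact List.map_congr_left fun t _ => (Term.subst_subst θ' θ₀ t).symm
    rw [hcomp, heq', hinst]
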